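/- For any permutations σ, τ of {1,...,d}, aex(σ) − aex(τ) ≤ |σ⁻¹τ|, where |π| denotes the minimal number of transpositions whose product is π. -/

import Mathlib

/-- The number of antiexceedances of a permutation: indices `i` with `π i ≤ i`. -/
def aex {d : ℕ} (π : Equiv.Perm (Fin d)) : ℕ :=
  (Finset.univ.filter (fun i => π i ≤ i)).card

/-- The number of cycles of a permutation, counting fixed points. -/
def cyc {d : ℕ} (π : Equiv.Perm (Fin d)) : ℕ :=
  π.cycleType.card + (d - π.support.card)

/-- The word length of `π` with respect to all transpositions: `d - cyc π`. -/
def len {d : ℕ} (π : Equiv.Perm (Fin d)) : ℕ := d - cyc π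

open Equiv Equiv.Perm Finset in
lemma my_cycleType_card_le {d : ℕ} (π : Equiv.Perm (Fin d)) :
    π.cycleType.card ≤ π.support.card := by
  rw [← π.sum_cycleType]
  calc Multiset.card π.cycleType = Multiset.card π.cycleType • 1 := by simp
    _ ≤ π.cycleType.sum :=
      Multiset.card_nsmul_le_sum (fun x hx => le_trans (by norm_num)
        (Equiv.Perm.two_le_of_mem_cycleType hx))

open Equiv Equiv.Perm Finset in
lemma my_len_eq {d : ℕ} (π : Equiv.Perm (Fin d)) :
    len π = π.support.card - Multiset.card π.cycleType := by
  have h1 : π.support.card ≤ d := by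
    simpa using Finset.card_le_card (Finset.subset_univ π.support)
  have h2 := my_cycleType_card_le π
  simp only [len, cyc]
  omega

open Equiv Equiv.Perm Finset in
lemma my_cycle_swap_list {d : ℕ} (n : ℕ) (c : Equiv.Perm (Fin d)) (hc : c.IsCycle)
    (hn : c.support.card ≤ n) :
    ∃ l : List (Equiv.Perm (Fin d)), (∀ t ∈ l, t.IsSwap) ∧ l.prod = c ∧
      l.length + 1 = c.support.card := by
  induction n generalizing c with
  | zero => exact absurd (le_trans hc.two_le_card_support hn) (by norm_num)
  | succ n ih =>
    obtain ⟨x, hx, -⟩ := id hc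
    by_cases h : c (c x) = x
    · refine ⟨[c], ?_, by simp, ?_⟩
      · intro t ht
        have ht' : t = c := List.mem_singleton.mp ht
        rw [ht']
        exact ⟨x, c x, Ne.symm hx, hc.eq_swap_of_apply_apply_eq_self hx h⟩
      · rw [hc.eq_swap_of_apply_apply_eq_self hx h, card_support_swap (Ne.symm hx)]
        simp
    · set g := Equiv.swap x (c x) * c with hg
      have hgc : g.IsCycle := hc.swap_mul hx h
      have hsupp : g.support = c.support \ {x} := support_swap_mul_eq c x h
      have hxs : x ∈ c.support := mem_support.2 hx
      have hcard : g.support.card + 1 = c.support.card := by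
        rw [hsupp, Finset.sdiff_singleton_eq_erase, Finset.card_erase_of_mem hxs]
        have := hc.two_le_card_support
        omega
      have hle : g.support.card ≤ n := by omega
      obtain ⟨l, hl1, hl2, hl3⟩ := ih g hgc hle
      refine ⟨Equiv.swap x (c x) :: l, ?_, ?_, by simp; omega⟩
      · intro t ht
        rcases List.mem_cons.mp ht with rfl | ht
        · exact ⟨x, c x, Ne.symm hx, rfl⟩
        · exact hl1 t ht
      · rw [List.prod_cons, hl2, hg, ← mul_assoc, Equiv.swap_mul_self, one_mul]

open Equiv Equiv.Perm Finset in
lemma my_swap_list {d : ℕ} (π : Equiv.Perm (Fin d)) :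
    ∃ l : List (Equiv.Perm (Fin d)), (∀ t ∈ l, t.IsSwap) ∧ l.prod = π ∧
      l.length = len π := by
  induction π using Equiv.Perm.cycle_induction_on with
  | base_one =>
    refine ⟨[], by simp, by simp, ?_⟩
    simp [my_len_eq]
  | base_cycles c hc =>
    obtain ⟨l, hl1, hl2, hl3⟩ := my_cycle_swap_list c.support.card c hc le_rfl
    refine ⟨l, hl1, hl2, ?_⟩
    rw [my_len_eq, hc.cycleType]
    simp only [Multiset.card_singleton]
    omega
  | induction_disjoint f g hd hf hpf hpg =>
    obtain ⟨lf, hf1, hf2, hf3⟩ := hpf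
    obtain ⟨lg, hg1, hg2, hg3⟩ := hpg
    refine ⟨lf ++ lg, ?_, by rw [List.prod_append, hf2, hg2], ?_⟩
    · intro t ht
      rcases List.mem_append.mp ht with ht | ht
      · exact hf1 t ht
      · exact hg1 t ht
    · rw [List.length_append, hf3, hg3, my_len_eq, my_len_eq, my_len_eq,
        Equiv.Perm.Disjoint.cycleType_mul hd, Equiv.Perm.Disjoint.card_support_mul hd, Multiset.card_add]
      have h1 := my_cycleType_card_le f
      have h2 := my_cycleType_card_le g
      omega

open Equiv Equiv.Perm Finset in
lemma my_aex_step {d : ℕ} (π : Equiv.Perm (Fin d)) (a b : Fin d) :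
    aex π ≤ aex (π * Equiv.swap a b) + 1 := by
  by_cases hab : a = b
  · subst hab; simp [Equiv.swap_self, Equiv.Perm.mul_refl]
  set ρ := π * Equiv.swap a b with hρ
  have hρa : ρ a = π b := by simp [hρ]
  have hρb : ρ b = π a := by simp [hρ]
  have hρi : ∀ i : Fin d, i ≠ a → i ≠ b → ρ i = π i := by
    intro i hia hib
    simp [hρ, Equiv.swap_apply_of_ne_of_ne hia hib]
  set A := Finset.univ.filter (fun i => π i ≤ i) with hA
  set B := Finset.univ.filter (fun i => ρ i ≤ i) with hB
  have hsub : A \ B ⊆ {a, b} := by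
    intro i hi
    simp only [Finset.mem_sdiff, hA, hB, Finset.mem_filter, Finset.mem_univ, true_and,
      not_le] at hi
    by_contra hiab
    simp only [Finset.mem_insert, Finset.mem_singleton, not_or] at hiab
    rw [hρi i hiab.1 hiab.2] at hi
    omega
  have hnotboth : ¬(a ∈ A \ B ∧ b ∈ A \ B) := by
    rintro ⟨ha, hb⟩
    simp only [Finset.mem_sdiff, hA, hB, Finset.mem_filter, Finset.mem_univ, true_and,
      not_le] at ha hb
    rw [hρa] at ha
    rw [hρb] at hb
    have h1 := ha.1; have h2 := ha.2; have h3 := hb.1; have h4 := hb.2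
    have : (π a : ℕ) ≤ a := h1
    have : (a : ℕ) < π b := ha.2
    omega
  have hcard1 : (A \ B).card ≤ 1 := by
    apply Finset.card_le_one.mpr
    intro x hx y hy
    have hx' := hsub hx
    have hy' := hsub hy
    simp only [Finset.mem_insert, Finset.mem_singleton] at hx' hy'
    rcases hx' with rfl | rfl <;> rcases hy' with rfl | rfl <;>
      first | rfl | exact absurd ⟨by assumption, by assumption⟩ hnotboth
  have : A.card ≤ B.card + (A \ B).card := by
    calc A.card = (A ∩ B).card + (A \ B).card := (Finset.card_inter_add_card_sdiff A B).symm
      _ ≤ B.card + (A \ B).card := by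
          gcongr; exact Finset.inter_subset_right
  have : aex π = A.card := rfl
  have : aex ρ = B.card := rfl
  show A.card ≤ B.card + 1
  omega

open Equiv Equiv.Perm Finset in
lemma my_list_step {d : ℕ} (l : List (Equiv.Perm (Fin d))) (hl : ∀ t ∈ l, t.IsSwap) :
    ∀ σ : Equiv.Perm (Fin d), (aex σ : ℤ) - aex (σ * l.prod) ≤ l.length := by
  induction l with
  | nil => intro σ; simp
  | cons t l ih =>
    intro σ
    obtain ⟨a, b, -, rfl⟩ := hl t (List.mem_cons_self (a := t) (l := l))
    have h1 : aex σ ≤ aex (σ * Equiv.swap a b) + 1 := my_aex_step σ a b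
    have h2 := ih (fun t ht => hl t (List.mem_cons_of_mem _ ht)) (σ * Equiv.swap a b)
    rw [List.prod_cons, ← mul_assoc]
    simp only [List.length_cons]
    push_cast at h1 h2 ⊢
    linarith

theorem aex_sub_aex_le_len (d : ℕ) (σ τ : Equiv.Perm (Fin d)) :
    (aex σ : ℤ) - aex τ ≤ len (σ⁻¹ * τ) := by
  obtain ⟨l, hl1, hl2, hl3⟩ := my_swap_list (σ⁻¹ * τ)
  have h := my_list_step l hl1 σ
  rw [hl2, ← mul_assoc, mul_inv_cancel, one_mul, hl3] at h
  exact h
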